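/- In the product setting with each factor a full-dimensional simplex (d_s = m_s and u^s : [m_s+1] → ℝ^{m_s} affinely independent for every s ∈ [t]), the product slope map Θ : ℝ^m → ℝ^m (where d = m = m_1 + ⋯ + m_t) is a continuous bijection from ℝ^m onto ℝ^m. -/

import Mathlib

open scoped RealInnerProductSpace

/-- The slope `ρ^ω(i,j)` of the edge from vertex `u i` to vertex `u j`,
with respect to the objective direction `c`. -/
noncomputable def rho {n d : ℕ} (u : Fin n → EuclideanSpace ℝ (Fin d))
    (c ω : EuclideanSpace ℝ (Fin d)) (i j : Fin n) : ℝ :=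
  ⟪ω, u j - u i⟫ / ⟪c, u j - u i⟫

/-- `τ^ω(i)`: the maximal slope from vertex `i` to a later vertex
(the supremum of the finite set of slopes `ρ^ω(i,j)` for `i < j`;
it is meaningful for non-maximal `i`, where this set is nonempty). -/
noncomputable def tau {n d : ℕ} (u : Fin n → EuclideanSpace ℝ (Fin d))
    (c ω : EuclideanSpace ℝ (Fin d)) (i : Fin n) : ℝ :=
  sSup {x : ℝ | ∃ j : Fin n, i < j ∧ x = rho u c ω i j}

/-- `ω` is generic: for each non-maximal vertex `i` there is a unique `j > i`
whose slope attains the maximal slope `τ^ω(i)`. -/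
def Generic {n d : ℕ} (u : Fin n → EuclideanSpace ℝ (Fin d))
    (c ω : EuclideanSpace ℝ (Fin d)) : Prop :=
  ∀ i : Fin n, (i : ℕ) + 1 < n →
    ∃! j : Fin n, i < j ∧ rho u c ω i j = tau u c ω i

/-- `A` is the max-slope arborescence `A^ω`: it fixes the maximal vertex, and
sends every other vertex `i` to an improving neighbour attaining `τ^ω(i)`. -/
def IsArbo {n d : ℕ} (u : Fin n → EuclideanSpace ℝ (Fin d))
    (c ω : EuclideanSpace ℝ (Fin d)) (A : Fin n → Fin n) : Prop :=
  (∀ i : Fin n, (i : ℕ) + 1 = n → A i = i) ∧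
  (∀ i : Fin n, (i : ℕ) + 1 < n →
    i < A i ∧ rho u c ω i (A i) = tau u c ω i)

/-- The top vertex `(n_1, …, n_t)` of the product polytope. -/
def topVertex {t : ℕ} (m : Fin t → ℕ) : ∀ s : Fin t, Fin (m s + 1) :=
  fun s => Fin.last (m s)

/-- The maximal slope at a vertex `v` of the product polytope: the supremum of
the slopes to improving neighbours, i.e. of the `ρ^{ω_s}(v_s, j)` for `j > v_s`
(a finite set, nonempty when `v` is not the top vertex). -/
noncomputable def prodTau {t : ℕ} {m d : Fin t → ℕ}
    (u : ∀ s : Fin t, Fin (m s + 1) → EuclideanSpace ℝ (Fin (d s)))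
    (c ω : ∀ s : Fin t, EuclideanSpace ℝ (Fin (d s)))
    (v : ∀ s : Fin t, Fin (m s + 1)) : ℝ :=
  sSup {x : ℝ | ∃ s : Fin t, ∃ j : Fin (m s + 1),
    v s < j ∧ x = rho (u s) (c s) (ω s) (v s) j}

/-- `ω` is generic for the product: at each vertex other than the top vertex,
the maximal slope is attained by a unique improving neighbour (encoded by the
coordinate `s` that moves and its new value `j`). -/
def ProdGeneric {t : ℕ} {m d : Fin t → ℕ}
    (u : ∀ s : Fin t, Fin (m s + 1) → EuclideanSpace ℝ (Fin (d s)))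
    (c ω : ∀ s : Fin t, EuclideanSpace ℝ (Fin (d s))) : Prop :=
  ∀ v : ∀ s : Fin t, Fin (m s + 1), v ≠ topVertex m →
    ∃! p : (s : Fin t) × Fin (m s + 1),
      v p.1 < p.2 ∧ rho (u p.1) (c p.1) (ω p.1) (v p.1) p.2 = prodTau u c ω v

/-- `A` is the max-slope arborescence `A^ω` of the product: it fixes the top
vertex, and sends every other vertex `v` to an improving neighbour (differing
from `v` in a single, increased, coordinate) attaining the maximal slope. -/
def ProdIsArbo {t : ℕ} {m d : Fin t → ℕ}
    (u : ∀ s : Fin t, Fin (m s + 1) → EuclideanSpace ℝ (Fin (d s)))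
    (c ω : ∀ s : Fin t, EuclideanSpace ℝ (Fin (d s)))
    (A : (∀ s : Fin t, Fin (m s + 1)) → ∀ s : Fin t, Fin (m s + 1)) : Prop :=
  A (topVertex m) = topVertex m ∧
  ∀ v : ∀ s : Fin t, Fin (m s + 1), v ≠ topVertex m → ∃ s : Fin t,
    v s < A v s ∧ (∀ r : Fin t, r ≠ s → A v r = v r) ∧
    rho (u s) (c s) (ω s) (v s) (A v s) = prodTau u c ω v

/-- The product slope map `Θ`, sending `ω = (ω_1, …, ω_t)` to the concatenation
of the slope vectors of its factors: its coordinates are indexed by the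
disjoint union `Σ s, [m_s]`, ordered lexicographically (which is the canonical
order-isomorphism with `[m]`, `m = m_1 + ⋯ + m_t`, identifying `(s, i)` with
`M_{s-1} + i`). -/
noncomputable def prodTheta {t : ℕ} {m d : Fin t → ℕ}
    (u : ∀ s : Fin t, Fin (m s + 1) → EuclideanSpace ℝ (Fin (d s)))
    (c : ∀ s : Fin t, EuclideanSpace ℝ (Fin (d s)))
    (ω : ∀ s : Fin t, EuclideanSpace ℝ (Fin (d s))) :
    Lex ((s : Fin t) × Fin (m s)) → ℝ :=
  fun q => tau (u (ofLex q).1) (c (ofLex q).1) (ω (ofLex q).1)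
    (Fin.castSucc (ofLex q).2)

/-- `ω` is strongly generic for the product: it is generic for the product and
the `m = m_1 + ⋯ + m_t` coordinates of `Θ(ω)` are pairwise distinct. -/
def ProdStronglyGeneric {t : ℕ} {m d : Fin t → ℕ}
    (u : ∀ s : Fin t, Fin (m s + 1) → EuclideanSpace ℝ (Fin (d s)))
    (c ω : ∀ s : Fin t, EuclideanSpace ℝ (Fin (d s))) : Prop :=
  ProdGeneric u c ω ∧ Function.Injective (prodTheta u c ω)

/-- One step of the `(m_1, …, m_t)`-sylvester rewriting rule on permutations of
`[m] ≅ Σₗ s, [m_s]` (in one-line notation): the letters at two consecutive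
positions `a ⋖ b` may be exchanged whenever they lie in the same block `s` and
some letter strictly between them in value appears at an earlier position
(`U j V i k W ≡ U j V k i W` for letters `i < j < k` with `i, k` — hence `j` —
in the same block). -/
def SylvRelT {t : ℕ} {m : Fin t → ℕ}
    (π π' : Equiv.Perm (Lex ((s : Fin t) × Fin (m s)))) : Prop :=
  ∃ a b : Lex ((s : Fin t) × Fin (m s)), a ⋖ b ∧ π' = π * Equiv.swap a b ∧
    (ofLex (π a)).1 = (ofLex (π b)).1 ∧
    ∃ e : Lex ((s : Fin t) × Fin (m s)),
      e < a ∧ min (π a) (π b) < π e ∧ π e < max (π a) (π b)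

/-- The `(m_1, …, m_t)`-sylvester congruence: the equivalence relation
generated by the `(m_1, …, m_t)`-sylvester rewriting rule. -/
def SylvT {t : ℕ} {m : Fin t → ℕ} :
    Equiv.Perm (Lex ((s : Fin t) × Fin (m s))) →
      Equiv.Perm (Lex ((s : Fin t) × Fin (m s))) → Prop :=
  Relation.EqvGen SylvRelT


namespace Stmt17

open Finset

variable {n : ℕ}

/-- The finset of indices strictly greater than `i`. -/
def Js (i : Fin (n + 1)) : Finset (Fin (n + 1)) := Finset.univ.filter (i < ·)

lemma mem_Js {i j : Fin (n + 1)} : j ∈ Js i ↔ i < j := by simp [Js]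

lemma Js_nonempty {i : Fin (n + 1)} (h : i ≠ Fin.last n) : (Js i).Nonempty :=
  ⟨Fin.last n, mem_Js.2 (lt_of_le_of_ne (Fin.le_last i) h)⟩

lemma castSucc_ne_last (i : Fin n) : (Fin.castSucc i) ≠ Fin.last n :=
  (Fin.castSucc_lt_last i).ne

/-- The abstract slope-max function on coordinates. -/
noncomputable def tauF (y x : Fin (n + 1) → ℝ) (i : Fin n) : ℝ :=
  (Js i.castSucc).sup' (Js_nonempty (castSucc_ne_last i))
    fun j => (x j - x i.castSucc) / (y j - y i.castSucc)

lemma tauF_lt_tauF {y : Fin (n + 1) → ℝ} (hy : StrictMono y) {x x' : Fin (n + 1) → ℝ}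
    (i : Fin n) (htail : ∀ j, i.castSucc < j → x j = x' j)
    (hlt : x i.castSucc < x' i.castSucc) : tauF y x' i < tauF y x i := by
  unfold tauF
  rw [Finset.sup'_lt_iff]
  intro j hj
  have hij : i.castSucc < j := mem_Js.1 hj
  have hd : 0 < y j - y i.castSucc := sub_pos.2 (hy hij)
  have h1 : (x' j - x' i.castSucc) / (y j - y i.castSucc)
      < (x j - x i.castSucc) / (y j - y i.castSucc) := by
    rw [← htail j hij, div_lt_div_iff_of_pos_right hd]
    linarith
  exact lt_of_lt_of_le h1
    (Finset.le_sup' (fun j => (x j - x i.castSucc) / (y j - y i.castSucc)) hj)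

lemma core_inj {y : Fin (n + 1) → ℝ} (hy : StrictMono y) {x x' : Fin (n + 1) → ℝ}
    (hlast : x (Fin.last n) = x' (Fin.last n))
    (h : ∀ i : Fin n, tauF y x i = tauF y x' i) : x = x' := by
  have key : ∀ k : ℕ, ∀ i : Fin (n + 1), n ≤ i.val + k → x i = x' i := by
    intro k
    induction k with
    | zero =>
      intro i hi
      have hi' : i = Fin.last n := Fin.ext (by have := i.isLt; simp only [Fin.val_last]; omega)
      rw [hi']; exact hlast
    | succ k ih =>
      intro i hi
      by_cases hil : i = Fin.last n
      · rw [hil]; exact hlast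
      · set i' := i.castPred hil with hi'def
        have hic : i'.castSucc = i := Fin.castSucc_castPred i hil
        have htail : ∀ j, i'.castSucc < j → x j = x' j := by
          intro j hj
          apply ih
          have hj' : i.val < j.val := by rw [← hic]; exact hj
          omega
        rcases lt_trichotomy (x i) (x' i) with hlt | heq | hgt
        · have := tauF_lt_tauF hy i' htail (by rwa [hic])
          exact absurd (h i') this.ne'
        · exact heq
        · have := tauF_lt_tauF hy i' (fun j hj => (htail j hj).symm) (by rwa [hic])
          exact absurd (h i') this.ne
  funext i
  exact key (n + 1) i (by omega)

lemma sup'_attach_eq {ι : Type*} (s : Finset ι) (H : s.attach.Nonempty) (H' : s.Nonempty)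
    (f : ι → ℝ) : s.attach.sup' H (fun j => f j.1) = s.sup' H' f := by
  apply le_antisymm
  · exact Finset.sup'_le _ _ fun j _ => Finset.le_sup' f j.2
  · exact Finset.sup'_le _ _ fun j hj =>
      Finset.le_sup' (fun j : {x // x ∈ s} => f j.1) (Finset.mem_attach _ ⟨j, hj⟩)

/-- The explicit inverse construction: solve downward for the coordinates. -/
noncomputable def solve (y : Fin (n + 1) → ℝ) (τ : Fin n → ℝ) (i : Fin (n + 1)) : ℝ :=
    if h : i = Fin.last n then 0
    else
      ((Js i).attach).sup'
        ⟨⟨Fin.last n, mem_Js.2 (lt_of_le_of_ne (Fin.le_last i) h)⟩, Finset.mem_attach _ _⟩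
        fun j => solve y τ j.1 - τ (i.castPred h) * (y j.1 - y i)
termination_by n - i.val
decreasing_by
  have h1 : i.val < j.1.val := mem_Js.1 j.2
  have h2 : j.1.val < n + 1 := j.1.isLt
  omega

lemma solve_eq {y : Fin (n + 1) → ℝ} {τ : Fin n → ℝ} {i : Fin (n + 1)} (h : i ≠ Fin.last n) :
    solve y τ i = (Js i).sup' (Js_nonempty h)
      (fun j => solve y τ j - τ (i.castPred h) * (y j - y i)) := by
  rw [solve, dif_neg h]
  exact sup'_attach_eq (Js i) _ (Js_nonempty h)
    (fun j => solve y τ j - τ (i.castPred h) * (y j - y i))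

lemma tauF_solve {y : Fin (n + 1) → ℝ} (hy : StrictMono y) (τ : Fin n → ℝ) (i : Fin n) :
    tauF y (solve y τ) i = τ i := by
  unfold tauF
  set x := solve y τ with hxdef
  have hne := castSucc_ne_last i
  have hx : x i.castSucc = (Js i.castSucc).sup' (Js_nonempty hne)
      (fun j => x j - τ i * (y j - y i.castSucc)) := by
    have h1 := solve_eq (y := y) (τ := τ) hne
    simpa [Fin.castPred_castSucc, ← hxdef] using h1
  apply le_antisymm
  · apply Finset.sup'_le
    intro j hj
    have hij := mem_Js.1 hj
    have hd : 0 < y j - y i.castSucc := sub_pos.2 (hy hij)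
    rw [div_le_iff₀ hd]
    have h2 : x j - τ i * (y j - y i.castSucc) ≤ x i.castSucc := by
      rw [hx]; exact Finset.le_sup' (fun j => x j - τ i * (y j - y i.castSucc)) hj
    linarith
  · obtain ⟨j, hj, hje⟩ := Finset.exists_mem_eq_sup' (Js_nonempty hne)
      (fun j => x j - τ i * (y j - y i.castSucc))
    have hij := mem_Js.1 hj
    have hd : 0 < y j - y i.castSucc := sub_pos.2 (hy hij)
    have hxi : x i.castSucc = x j - τ i * (y j - y i.castSucc) := hx.trans hje
    have hslope : (x j - x i.castSucc) / (y j - y i.castSucc) = τ i := by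
      rw [hxi]
      field_simp
      ring
    rw [← hslope]
    exact Finset.le_sup' (fun j => (x j - x i.castSucc) / (y j - y i.castSucc)) hj

lemma tauF_shift (y x : Fin (n + 1) → ℝ) (C : ℝ) (i : Fin n) :
    tauF y (fun k => x k + C) i = tauF y x i := by
  unfold tauF
  apply Finset.sup'_congr _ rfl
  intro j _
  ring

lemma continuous_sup' {α ι : Type*} [TopologicalSpace α] (s : Finset ι)
    (f : ι → α → ℝ) (hf : ∀ j, Continuous (f j)) :
    ∀ H : s.Nonempty, Continuous fun a => s.sup' H fun j => f j a := by
  induction s using Finset.cons_induction with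
  | empty => intro H; exact absurd H (by simp)
  | cons a s ha ih =>
    intro H
    rcases s.eq_empty_or_nonempty with rfl | hs
    · simpa using hf a
    · have heq : (fun x => (Finset.cons a s ha).sup' H fun j => f j x)
          = fun x => (f a x) ⊔ (s.sup' hs fun j => f j x) := by
        funext x
        exact Finset.sup'_cons (H := hs) (f := fun j => f j x) (hb := ha)
      rw [heq]
      exact (hf a).sup (ih hs)

lemma continuous_tauF {α : Type*} [TopologicalSpace α] (y : Fin (n + 1) → ℝ)
    (x : α → Fin (n + 1) → ℝ) (hx : ∀ k, Continuous fun a => x a k) (i : Fin n) :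
    Continuous fun a => tauF y (x a) i := by
  unfold tauF
  exact continuous_sup' _ _ (fun j => ((hx j).sub (hx i.castSucc)).div_const _) _

/-! ### Per-factor lemmas connecting `tau` to `tauF` -/

lemma rho_eq {N d : ℕ} (u : Fin N → EuclideanSpace ℝ (Fin d))
    (c ω : EuclideanSpace ℝ (Fin d)) (i j : Fin N) :
    rho u c ω i j = ((⟪ω, u j⟫) - ⟪ω, u i⟫) / ((⟪c, u j⟫) - ⟪c, u i⟫) := by
  rw [rho, inner_sub_right, inner_sub_right]

lemma tau_eq {d : ℕ} (u : Fin (n + 1) → EuclideanSpace ℝ (Fin d))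
    (c ω : EuclideanSpace ℝ (Fin d)) (i : Fin n) :
    tau u c ω i.castSucc
      = tauF (fun k => ⟪c, u k⟫) (fun k => ⟪ω, u k⟫) i := by
  rw [tauF, Finset.sup'_eq_csSup_image, tau]
  congr 1
  ext r
  simp only [Set.mem_setOf_eq, Set.mem_image, Finset.mem_coe, mem_Js]
  constructor
  · rintro ⟨j, hj, rfl⟩
    exact ⟨j, hj, (rho_eq u c ω i.castSucc j).symm⟩
  · rintro ⟨j, hj, rfl⟩
    exact ⟨j, hj, (rho_eq u c ω i.castSucc j).symm⟩

/-! ### Linear algebra on a full-dimensional simplex -/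

lemma b_li {m : ℕ} {u : Fin (m + 1) → EuclideanSpace ℝ (Fin m)}
    (hu : AffineIndependent ℝ u) :
    LinearIndependent ℝ (fun k : Fin m => u k.succ - u 0) := by
  have h := (affineIndependent_iff_linearIndependent_vsub ℝ u 0).1 hu
  have h2 := h.comp
    (fun k : Fin m => (⟨k.succ, Fin.succ_ne_zero k⟩ : {x : Fin (m + 1) // x ≠ 0}))
    (fun a b hab => Fin.succ_injective _ (congrArg Subtype.val hab))
  exact h2

/-- The linear map `ω ↦ (⟪ω, u (k+1) - u 0⟫)ₖ`. -/
noncomputable def L {m : ℕ} (u : Fin (m + 1) → EuclideanSpace ℝ (Fin m)) :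
    EuclideanSpace ℝ (Fin m) →ₗ[ℝ] (Fin m → ℝ) where
  toFun ω := fun k => ⟪ω, u k.succ - u 0⟫
  map_add' a b := by funext k; exact inner_add_left a b (u k.succ - u 0)
  map_smul' r a := by funext k; exact real_inner_smul_left a (u k.succ - u 0) r

lemma L_inj {m : ℕ} {u : Fin (m + 1) → EuclideanSpace ℝ (Fin m)}
    (hu : AffineIndependent ℝ u) : Function.Injective (L u) := by
  refine (injective_iff_map_eq_zero (L u)).2 ?_
  intro v hv
  have hb : ∀ k : Fin m, ⟪v, u k.succ - u 0⟫ = 0 := fun k => congrFun hv k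
  have li := b_li hu
  have hcard : Fintype.card (Fin m) = Module.finrank ℝ (EuclideanSpace ℝ (Fin m)) := by
    simp [finrank_euclideanSpace_fin]
  have hspan : Submodule.span ℝ (Set.range fun k : Fin m => u k.succ - u 0) = ⊤ :=
    li.span_eq_top_of_card_eq_finrank' hcard
  have hall : ∀ w ∈ Submodule.span ℝ (Set.range fun k : Fin m => u k.succ - u 0),
      (⟪v, w⟫ : ℝ) = 0 := by
    intro w hw
    induction hw using Submodule.span_induction with
    | mem w hw => obtain ⟨k, rfl⟩ := hw; exact hb k
    | zero => simp
    | add a b _ _ ha hb' => rw [inner_add_right, ha, hb', add_zero]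
    | smul r a _ ha => rw [real_inner_smul_right, ha, mul_zero]
  have hv0 : (⟪v, v⟫ : ℝ) = 0 := hall v (hspan ▸ Submodule.mem_top)
  exact inner_self_eq_zero.1 hv0

lemma L_surj {m : ℕ} {u : Fin (m + 1) → EuclideanSpace ℝ (Fin m)}
    (hu : AffineIndependent ℝ u) : Function.Surjective (L u) := by
  have hrank : Module.finrank ℝ (EuclideanSpace ℝ (Fin m))
      = Module.finrank ℝ (Fin m → ℝ) := by
    simp [finrank_euclideanSpace_fin]
  exact (LinearMap.injective_iff_surjective_of_finrank_eq_finrank hrank).1 (L_inj hu)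

/-! ### Per-factor bijectivity of the slope map -/

lemma factor_inj {m : ℕ} {u : Fin (m + 1) → EuclideanSpace ℝ (Fin m)}
    (hu : AffineIndependent ℝ u) {c : EuclideanSpace ℝ (Fin m)}
    (hc : ∀ i j : Fin (m + 1), i < j → (⟪c, u i⟫ : ℝ) < ⟪c, u j⟫)
    {ω ω' : EuclideanSpace ℝ (Fin m)}
    (h : ∀ i : Fin m, tau u c ω i.castSucc = tau u c ω' i.castSucc) : ω = ω' := by
  set y : Fin (m + 1) → ℝ := fun k => ⟪c, u k⟫ with hy_def
  have hy : StrictMono y := fun a b hab => hc a b hab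
  set x : Fin (m + 1) → ℝ := fun k => ⟪ω, u k⟫ with hx_def
  set x' : Fin (m + 1) → ℝ := fun k => ⟪ω', u k⟫ with hx'_def
  set C : ℝ := x (Fin.last m) - x' (Fin.last m) with hC_def
  have hx : x = fun k => x' k + C := by
    apply core_inj hy
    · simp [hC_def]
    · intro i
      rw [tauF_shift]
      have h1 := tau_eq u c ω i
      have h2 := tau_eq u c ω' i
      rw [← hx_def] at h1
      rw [← hx'_def] at h2
      rw [← h1, ← h2]
      exact h i
  have hzero : ∀ k : Fin m, (⟪ω - ω', u k.succ - u 0⟫ : ℝ) = 0 := by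
    intro k
    have h1 : x k.succ = x' k.succ + C := congrFun hx k.succ
    have h0 : x 0 = x' 0 + C := congrFun hx 0
    simp only [hx_def, hx'_def] at h1 h0
    simp only [inner_sub_left, inner_sub_right]
    linarith
  have hL : L u (ω - ω') = L u 0 := by
    rw [map_zero]
    exact funext hzero
  have := L_inj hu hL
  exact sub_eq_zero.1 this

lemma factor_surj {m : ℕ} {u : Fin (m + 1) → EuclideanSpace ℝ (Fin m)}
    (hu : AffineIndependent ℝ u) {c : EuclideanSpace ℝ (Fin m)}
    (hc : ∀ i j : Fin (m + 1), i < j → (⟪c, u i⟫ : ℝ) < ⟪c, u j⟫)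
    (τ : Fin m → ℝ) :
    ∃ ω : EuclideanSpace ℝ (Fin m), ∀ i : Fin m, tau u c ω i.castSucc = τ i := by
  set y : Fin (m + 1) → ℝ := fun k => ⟪c, u k⟫ with hy_def
  have hy : StrictMono y := fun a b hab => hc a b hab
  set x : Fin (m + 1) → ℝ := solve y τ with hx_def
  obtain ⟨ω, hω⟩ := L_surj hu (fun k => x k.succ - x 0)
  refine ⟨ω, fun i => ?_⟩
  have hX : (fun k => (⟪ω, u k⟫ : ℝ)) = fun k => x k + ((⟪ω, u 0⟫ : ℝ) - x 0) := by
    funext k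
    cases k using Fin.cases with
    | zero => ring
    | succ k' =>
      have h1 : (⟪ω, u k'.succ - u 0⟫ : ℝ) = x k'.succ - x 0 := congrFun hω k'
      rw [inner_sub_right] at h1
      linarith
  rw [tau_eq, hX, tauF_shift]
  exact tauF_solve hy τ i

end Stmt17

/-- for a product of full-dimensional simplices, the product
slope map `Θ` is a continuous bijection from `ℝ^m` onto `ℝ^m`,
`m = m_1 + ⋯ + m_t` (the domain being identified with the product of the
`ℝ^{m_s}` and the codomain with real vectors indexed by `Σ s, [m_s]`). -/
theorem prod_slope_map_continuous_bijective (t : ℕ) (ht : 1 ≤ t)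
    (m : Fin t → ℕ) (hm : ∀ s : Fin t, 1 ≤ m s)
    (u : ∀ s : Fin t, Fin (m s + 1) → EuclideanSpace ℝ (Fin (m s)))
    (hu : ∀ s : Fin t, AffineIndependent ℝ (u s))
    (c : ∀ s : Fin t, EuclideanSpace ℝ (Fin (m s)))
    (hc : ∀ s : Fin t, ∀ i j : Fin (m s + 1), i < j → ⟪c s, u s i⟫ < ⟪c s, u s j⟫) :
    Continuous (prodTheta u c) ∧ Function.Bijective (prodTheta u c) := by
  constructor
  · apply continuous_pi
    intro q
    have heq : (fun ω : ∀ s : Fin t, EuclideanSpace ℝ (Fin (m s)) => prodTheta u c ω q)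
        = fun ω => Stmt17.tauF (fun k => ⟪c (ofLex q).1, u (ofLex q).1 k⟫)
            (fun k => ⟪ω (ofLex q).1, u (ofLex q).1 k⟫) (ofLex q).2 := by
      funext ω
      exact Stmt17.tau_eq (u (ofLex q).1) (c (ofLex q).1) (ω (ofLex q).1) (ofLex q).2
    rw [heq]
    exact Stmt17.continuous_tauF _ _
      (fun k => (continuous_apply _).inner continuous_const) _
  · constructor
    · intro ω ω' h
      funext s
      apply Stmt17.factor_inj (hu s) (hc s)
      intro i
      exact congrFun h (toLex ⟨s, i⟩)
    · intro g
      choose ω hω using fun s => Stmt17.factor_surj (hu s) (hc s) (fun i => g (toLex ⟨s, i⟩))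
      refine ⟨ω, ?_⟩
      funext q
      exact hω (ofLex q).1 (ofLex q).2
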